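/- For every p ≥ 1, every x ∈ [0,1]^p and every y ∈ {0,1}^p with ‖x‖₁ + ‖y‖₁ > 0, Δ_SDL(x,y) = Δ_DML1(x,y) = Δ_DML2(x,y); and the same equalities hold when x ∈ {0,1}^p and y ∈ [0,1]^p with ‖x‖₁ + ‖y‖₁ > 0. -/

import Mathlib

open Finset

/-- The L¹ norm of a vector. -/
noncomputable def l1 {p : ℕ} (z : Fin p → ℝ) : ℝ := ∑ i, |z i|

/-- The first Dice semimetric loss. -/
noncomputable def DML1 {p : ℕ} (x y : Fin p → ℝ) : ℝ :=
  1 - (l1 (x + y) - l1 (x - y)) / l1 (x + y)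

/-- The second Dice semimetric loss. -/
noncomputable def DML2 {p : ℕ} (x y : Fin p → ℝ) : ℝ :=
  1 - 2 * l1 (x * y) / (2 * l1 (x * y) + l1 (x - y))

/-- The soft Dice loss. -/
noncomputable def SDL {p : ℕ} (x y : Fin p → ℝ) : ℝ :=
  1 - 2 * (∑ i, x i * y i) / (l1 x + l1 y)

lemma abs_sub_hard {a b : ℝ} (ha : 0 ≤ a ∧ a ≤ 1) (hb : 0 ≤ b ∧ b ≤ 1)
    (h : b = 0 ∨ b = 1 ∨ a = 0 ∨ a = 1) : |a - b| = a + b - 2 * (a * b) := by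
  rcases h with h | h | h | h <;> subst h
  · rw [sub_zero, abs_of_nonneg ha.1]; ring
  · rw [abs_sub_comm, abs_of_nonneg (by linarith [ha.2])]; ring
  · rw [abs_sub_comm, sub_zero, abs_of_nonneg hb.1]; ring
  · rw [abs_of_nonneg (by linarith [hb.2])]; ring

/-- Theorem 2 (first half): when one of the two arguments is a hard (0-1) label
vector, the soft Dice loss coincides with both Dice semimetric losses. -/
theorem sdl_eq_dml_hard_labels {p : ℕ} (hp : 1 ≤ p) (x y : Fin p → ℝ)
    (hx : ∀ i, 0 ≤ x i ∧ x i ≤ 1) (hy : ∀ i, 0 ≤ y i ∧ y i ≤ 1)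
    (hpos : 0 < l1 x + l1 y)
    (hhard : (∀ i, y i = 0 ∨ y i = 1) ∨ (∀ i, x i = 0 ∨ x i = 1)) :
    SDL x y = DML1 x y ∧ DML1 x y = DML2 x y := by
  set S : ℝ := ∑ i, x i * y i with hS
  have h1 : l1 (x + y) = l1 x + l1 y := by
    simp only [l1, ← Finset.sum_add_distrib]
    refine Finset.sum_congr rfl fun i _ => ?_
    have := (hx i).1; have := (hy i).1
    simp only [Pi.add_apply]
    rw [abs_of_nonneg (by linarith), abs_of_nonneg (by assumption),
      abs_of_nonneg (by assumption)]
  have h2 : l1 (x - y) = l1 x + l1 y - 2 * S := by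
    simp only [l1, hS, ← Finset.sum_add_distrib, Finset.mul_sum, ← Finset.sum_sub_distrib]
    refine Finset.sum_congr rfl fun i _ => ?_
    have habs : |x i - y i| = x i + y i - 2 * (x i * y i) := by
      apply abs_sub_hard (hx i) (hy i)
      rcases hhard with h | h
      · rcases h i with h | h
        · exact Or.inl h
        · exact Or.inr (Or.inl h)
      · rcases h i with h | h
        · exact Or.inr (Or.inr (Or.inl h))
        · exact Or.inr (Or.inr (Or.inr h))
    have := (hx i).1; have := (hy i).1
    simp only [Pi.sub_apply]
    rw [habs, abs_of_nonneg (by assumption), abs_of_nonneg (by assumption)]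
  have h3 : l1 (x * y) = S := by
    simp only [l1, hS]
    refine Finset.sum_congr rfl fun i _ => ?_
    have := (hx i).1; have := (hy i).1
    simp only [Pi.mul_apply]
    exact abs_of_nonneg (by positivity)
  have hN : l1 x + l1 y ≠ 0 := ne_of_gt hpos
  constructor
  · rw [SDL, DML1, h1, h2]
    congr 1
    field_simp
    rw [hS]; ring
  · rw [DML1, DML2, h1, h2, h3]
    have : 2 * S + (l1 x + l1 y - 2 * S) = l1 x + l1 y := by ring
    rw [this]
    congr 1
    field_simp
    rw [hS]; ring
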